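/- (One implicit Euler step preserves stationary supersolutions.) Let d ≥ 1, p ∈ (1,∞), s ∈ (0,1), m > 1, q > 0, Δt > 0, and let Ω ⊂ ℝ^d be open and bounded. Let w ∈ W^{s,p}_0(Ω) ∩ L^∞(Ω) with w ≥ 0 a.e. be a weak supersolution of (−Δ)^s_p w = w^{q/m}, i.e. E(w, φ) ≥ ∫_Ω w^{q/m}φ dx for every nonnegative φ ∈ W^{s,p}_0(Ω). Let v ∈ W^{s,p}_0(Ω) ∩ L^∞(Ω) satisfy, for every φ ∈ W^{s,p}_0(Ω) ∩ L^∞(Ω): (1/Δt)∫_Ω (β(v) − β(w))φ dx + E(v, φ) = ∫_Ω w^{q/m}φ dx. Then 0 ≤ v ≤ w a.e. in Ω, and v is itself a weak supersolution: E(v, φ) ≥ ∫_Ω v^{q/m}φ dx for every nonnegative φ ∈ W^{s,p}_0(Ω). -/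

import Mathlib

open MeasureTheory ENNReal

/-- Signed power: `spow r x = |x|^(r-1) * x`. -/
noncomputable def spow (r x : ℝ) : ℝ := |x| ^ (r - 1) * x

/-- Fractional p-Laplacian pairing
`E(u,φ) = ∫∫ ⟦u(x)−u(y)⟧^{p−1}(φ(x)−φ(y)) |x−y|^{−(d+sp)} dx dy`. -/
noncomputable def fracPairing (d : ℕ) (s p : ℝ)
    (u φ : EuclideanSpace ℝ (Fin d) → ℝ) : ℝ :=
  ∫ z : EuclideanSpace ℝ (Fin d) × EuclideanSpace ℝ (Fin d),
    spow (p - 1) (u z.1 - u z.2) * (φ z.1 - φ z.2) / ‖z.1 - z.2‖ ^ ((d : ℝ) + s * p)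

/-- Gagliardo seminorm to the `p`-th power, as an extended nonnegative real. -/
noncomputable def gagliardo (d : ℕ) (s p : ℝ)
    (u : EuclideanSpace ℝ (Fin d) → ℝ) : ℝ≥0∞ :=
  ∫⁻ z : EuclideanSpace ℝ (Fin d) × EuclideanSpace ℝ (Fin d),
    ENNReal.ofReal (|u z.1 - u z.2| ^ p / ‖z.1 - z.2‖ ^ ((d : ℝ) + s * p))

/-- Membership in `W^{s,p}_0(Ω)`. -/
def memW0 (d : ℕ) (s p : ℝ) (Ω : Set (EuclideanSpace ℝ (Fin d)))
    (u : EuclideanSpace ℝ (Fin d) → ℝ) : Prop :=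
  Measurable u ∧ MemLp u (ENNReal.ofReal p) volume ∧
    gagliardo d s p u < ⊤ ∧ ∀ᵐ x, x ∉ Ω → u x = 0

lemma spow_zero (r : ℝ) : spow r 0 = 0 := by simp [spow]


lemma spow_of_nonneg {r x : ℝ} (hr : 0 < r) (hx : 0 ≤ x) : spow r x = x ^ r := by
  rcases hx.eq_or_lt with h | h
  · simp [← h, spow, Real.zero_rpow hr.ne']
  · rw [spow, abs_of_pos h, ← Real.rpow_add_one h.ne', sub_add_cancel]

lemma spow_neg (r x : ℝ) : spow r (-x) = - spow r x := by
  simp [spow, mul_comm]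

lemma abs_spow {r : ℝ} (hr : 0 < r) (x : ℝ) : |spow r x| = |x| ^ r := by
  rcases eq_or_ne x 0 with h | h
  · simp [h, spow, Real.zero_rpow hr.ne']
  · rw [spow, abs_mul, abs_of_nonneg (Real.rpow_nonneg (abs_nonneg x) _),
      ← Real.rpow_add_one (abs_ne_zero.2 h), sub_add_cancel]

lemma spow_neg_of_neg {r x : ℝ} (hx : x < 0) : spow r x < 0 :=
  mul_neg_of_pos_of_neg (Real.rpow_pos_of_pos (abs_pos.2 hx.ne) _) hx

lemma spow_strictMono {r : ℝ} (hr : 0 < r) : StrictMono (spow r) := by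
  intro x y hxy
  rcases le_or_gt 0 x with hx | hx
  · rw [spow_of_nonneg hr hx, spow_of_nonneg hr (hx.trans hxy.le)]
    exact Real.rpow_lt_rpow hx hxy hr
  · rcases le_or_gt y 0 with hy | hy
    · have h2 : spow r (-y) < spow r (-x) := by
        rw [spow_of_nonneg hr (neg_nonneg.2 hy), spow_of_nonneg hr (neg_nonneg.2 hx.le)]
        exact Real.rpow_lt_rpow (neg_nonneg.2 hy) (neg_lt_neg hxy) hr
      rw [spow_neg, spow_neg] at h2
      linarith
    · calc spow r x < 0 := spow_neg_of_neg hx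
        _ ≤ spow r y := by
            rw [spow_of_nonneg hr hy.le]; exact Real.rpow_nonneg hy.le _

lemma spow_mono {r : ℝ} (hr : 0 < r) : Monotone (spow r) := (spow_strictMono hr).monotone

lemma spow_sub_mul_max_nonneg {r : ℝ} (hr : 0 < r) {A B a b : ℝ} (hAB : A - B = a - b) :
    0 ≤ (spow r A - spow r B) * (max a 0 - max b 0) := by
  rcases le_total a b with h | h
  · have h1 : spow r A ≤ spow r B := spow_mono hr (by linarith)
    have h2 : max a 0 ≤ max b 0 := max_le_max h le_rfl
    nlinarith
  · have h1 : spow r B ≤ spow r A := spow_mono hr (by linarith)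
    have h2 : max b 0 ≤ max a 0 := max_le_max h le_rfl
    exact mul_nonneg (by linarith) (by linarith)

lemma measurable_spow (r : ℝ) : Measurable (spow r) := by
  unfold spow
  exact (measurable_abs.pow measurable_const).mul measurable_id

lemma abs_min_sub_min_le_abs (a b c : ℝ) : |min a c - min b c| ≤ |a - b| := by
  rw [abs_le]
  have h1 := le_abs_self (a - b)
  have h2 := neg_abs_le (a - b)
  rcases le_total a c with h3 | h3 <;> rcases le_total b c with h4 | h4 <;>
    simp only [min_eq_left, min_eq_right, h3, h4] <;> constructor <;> linarith

section Gag
variable {d : ℕ} {s p : ℝ}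

lemma measurable_gagIntegrand {u : EuclideanSpace ℝ (Fin d) → ℝ} (hu : Measurable u) :
    Measurable fun z : EuclideanSpace ℝ (Fin d) × EuclideanSpace ℝ (Fin d) =>
      |u z.1 - u z.2| ^ p / ‖z.1 - z.2‖ ^ ((d : ℝ) + s * p) :=
  (((hu.comp measurable_fst).sub (hu.comp measurable_snd)).abs.pow measurable_const).div
    ((measurable_fst.sub measurable_snd).norm.pow measurable_const)

lemma gagliardo_mono (hp : 0 ≤ p) {u φ : EuclideanSpace ℝ (Fin d) → ℝ}
    (h : ∀ x y, |φ x - φ y| ≤ |u x - u y|) :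
    gagliardo d s p φ ≤ gagliardo d s p u := by
  refine lintegral_mono fun z => ENNReal.ofReal_le_ofReal ?_
  rw [div_eq_mul_inv, div_eq_mul_inv]
  exact mul_le_mul_of_nonneg_right (Real.rpow_le_rpow (abs_nonneg _) (h _ _) hp)
    (inv_nonneg.2 (Real.rpow_nonneg (norm_nonneg _) _))

lemma add_rpow_le {p : ℝ} (hp : 1 ≤ p) {a b : ℝ} (ha : 0 ≤ a) (hb : 0 ≤ b) :
    (a + b) ^ p ≤ 2 ^ p * (a ^ p + b ^ p) := by
  have h1 : a + b ≤ 2 * max a b := by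
    rcases le_total a b with h | h
    · rw [max_eq_right h]; linarith
    · rw [max_eq_left h]; linarith
  calc (a + b) ^ p ≤ (2 * max a b) ^ p :=
        Real.rpow_le_rpow (by positivity) h1 (by linarith)
    _ = 2 ^ p * (max a b) ^ p := Real.mul_rpow (by norm_num) (le_max_of_le_left ha)
    _ ≤ 2 ^ p * (a ^ p + b ^ p) := by
        refine mul_le_mul_of_nonneg_left ?_ (Real.rpow_nonneg (by norm_num) _)
        rcases le_total a b with h | h
        · rw [max_eq_right h]; nlinarith [Real.rpow_nonneg ha p]
        · rw [max_eq_left h]; nlinarith [Real.rpow_nonneg hb p]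

lemma gagliardo_sub_lt_top (hp : 1 ≤ p) {u w : EuclideanSpace ℝ (Fin d) → ℝ}
    (hu : Measurable u) (h1 : gagliardo d s p u < ⊤) (h2 : gagliardo d s p w < ⊤) :
    gagliardo d s p (fun x => u x - w x) < ⊤ := by
  set K : EuclideanSpace ℝ (Fin d) × EuclideanSpace ℝ (Fin d) → ℝ :=
    fun z => ‖z.1 - z.2‖ ^ ((d : ℝ) + s * p) with hK
  have hKnn : ∀ z, 0 ≤ K z := fun z => Real.rpow_nonneg (norm_nonneg _) _
  have key : ∀ z : EuclideanSpace ℝ (Fin d) × EuclideanSpace ℝ (Fin d),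
      ENNReal.ofReal (|(u z.1 - w z.1) - (u z.2 - w z.2)| ^ p / K z)
        ≤ ENNReal.ofReal (2 ^ p * (|u z.1 - u z.2| ^ p / K z))
          + ENNReal.ofReal (2 ^ p * (|w z.1 - w z.2| ^ p / K z)) := by
    intro z
    rw [← ENNReal.ofReal_add (by positivity) (by positivity)]
    apply ENNReal.ofReal_le_ofReal
    have habs : |(u z.1 - w z.1) - (u z.2 - w z.2)| ≤ |u z.1 - u z.2| + |w z.1 - w z.2| := by
      have : (u z.1 - w z.1) - (u z.2 - w z.2) = (u z.1 - u z.2) - (w z.1 - w z.2) := by ring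
      rw [this]; exact abs_sub _ _
    have h3 : |(u z.1 - w z.1) - (u z.2 - w z.2)| ^ p
        ≤ 2 ^ p * (|u z.1 - u z.2| ^ p + |w z.1 - w z.2| ^ p) :=
      (Real.rpow_le_rpow (abs_nonneg _) habs (by linarith)).trans
        (add_rpow_le hp (abs_nonneg _) (abs_nonneg _))
    rw [div_eq_mul_inv]
    refine le_trans (mul_le_mul_of_nonneg_right h3 (inv_nonneg.2 (hKnn z))) (le_of_eq ?_)
    ring
  calc gagliardo d s p (fun x => u x - w x)
      ≤ ∫⁻ z, (ENNReal.ofReal (2 ^ p * (|u z.1 - u z.2| ^ p / K z))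
          + ENNReal.ofReal (2 ^ p * (|w z.1 - w z.2| ^ p / K z))) := lintegral_mono key
    _ = (∫⁻ z, ENNReal.ofReal (2 ^ p * (|u z.1 - u z.2| ^ p / K z)))
          + ∫⁻ z, ENNReal.ofReal (2 ^ p * (|w z.1 - w z.2| ^ p / K z)) :=
        lintegral_add_left ((measurable_gagIntegrand hu).const_mul _).ennreal_ofReal _
    _ = ENNReal.ofReal (2 ^ p) * gagliardo d s p u
          + ENNReal.ofReal (2 ^ p) * gagliardo d s p w := by
        unfold gagliardo
        rw [← lintegral_const_mul' _ _ ENNReal.ofReal_ne_top,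
          ← lintegral_const_mul' _ _ ENNReal.ofReal_ne_top]
        congr 1 <;> refine lintegral_congr fun z => ?_ <;>
          rw [← ENNReal.ofReal_mul (by positivity)]
    _ < ⊤ := ENNReal.add_lt_top.2
        ⟨ENNReal.mul_lt_top ENNReal.ofReal_lt_top h1,
         ENNReal.mul_lt_top ENNReal.ofReal_lt_top h2⟩

end Gag

section Holder
variable {d : ℕ} {s p : ℝ}

lemma holder_integrable (hp : 1 < p) {u φ : EuclideanSpace ℝ (Fin d) → ℝ}
    (hu : Measurable u) (hφ : Measurable φ)
    (h1 : gagliardo d s p u < ⊤) (h2 : gagliardo d s p φ < ⊤) :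
    Integrable (fun z : EuclideanSpace ℝ (Fin d) × EuclideanSpace ℝ (Fin d) =>
      |u z.1 - u z.2| ^ (p - 1) * |φ z.1 - φ z.2| / ‖z.1 - z.2‖ ^ ((d : ℝ) + s * p)) := by
  have hp0 : (0:ℝ) < p := by linarith
  have hpq : (p / (p - 1)).HolderConjugate p := (Real.HolderConjugate.conjExponent hp).symm
  set q' : ℝ := p / (p - 1) with hq'
  have hq'pos : 0 < q' := hpq.pos
  have hinv : 1 / q' + 1 / p = 1 := by
    rw [one_div, one_div]; exact hpq.inv_add_inv_eq_one
  set K : EuclideanSpace ℝ (Fin d) × EuclideanSpace ℝ (Fin d) → ℝ :=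
    fun z => ‖z.1 - z.2‖ ^ ((d : ℝ) + s * p) with hKdef
  have hKnn : ∀ z, 0 ≤ K z := fun z => Real.rpow_nonneg (norm_nonneg _) _
  set F : EuclideanSpace ℝ (Fin d) × EuclideanSpace ℝ (Fin d) → ℝ≥0∞ :=
    fun z => ENNReal.ofReal (|u z.1 - u z.2| ^ p / K z) with hF
  set G : EuclideanSpace ℝ (Fin d) × EuclideanSpace ℝ (Fin d) → ℝ≥0∞ :=
    fun z => ENNReal.ofReal (|φ z.1 - φ z.2| ^ p / K z) with hG
  have hFmeas : Measurable F := (measurable_gagIntegrand hu).ennreal_ofReal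
  have hGmeas : Measurable G := (measurable_gagIntegrand hφ).ennreal_ofReal
  have key : ∀ z, ENNReal.ofReal (|u z.1 - u z.2| ^ (p - 1) * |φ z.1 - φ z.2| / K z)
      ≤ F z ^ (1 / q') * G z ^ (1 / p) := by
    intro z
    set a : ℝ := |u z.1 - u z.2| with ha
    set b : ℝ := |φ z.1 - φ z.2| with hb
    have hav : 0 ≤ a := abs_nonneg _
    have hbv : 0 ≤ b := abs_nonneg _
    rcases (hKnn z).eq_or_lt with hK0 | hK0
    · have hz1 : ENNReal.ofReal (a ^ (p - 1) * b / K z) = 0 := by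
        rw [← hK0, _root_.div_zero, ENNReal.ofReal_zero]
      have hz2 : F z = 0 := by
        show ENNReal.ofReal (a ^ p / K z) = 0
        rw [← hK0, _root_.div_zero, ENNReal.ofReal_zero]
      rw [hz1, hz2, ENNReal.zero_rpow_of_pos (by positivity), zero_mul]
    · have e1 : F z ^ (1 / q') = ENNReal.ofReal ((a ^ p / K z) ^ (1 / q')) :=
        ENNReal.ofReal_rpow_of_nonneg (by positivity) (by positivity)
      have e2 : G z ^ (1 / p) = ENNReal.ofReal ((b ^ p / K z) ^ (1 / p)) :=
        ENNReal.ofReal_rpow_of_nonneg (by positivity) (by positivity)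
      rw [e1, e2, ← ENNReal.ofReal_mul (by positivity)]
      apply ENNReal.ofReal_le_ofReal
      apply le_of_eq
      rw [Real.div_rpow (by positivity) (hKnn z), Real.div_rpow (by positivity) (hKnn z),
        div_mul_div_comm, ← Real.rpow_mul hav, ← Real.rpow_mul hbv,
        ← Real.rpow_add hK0]
      have c1 : p * (1 / q') = p - 1 := by
        rw [hq']; field_simp
      have c2 : p * (1 / p) = 1 := by field_simp
      rw [c1, c2, hinv, Real.rpow_one, Real.rpow_one]
  have hfmeas : Measurable (fun z : EuclideanSpace ℝ (Fin d) × EuclideanSpace ℝ (Fin d) =>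
      |u z.1 - u z.2| ^ (p - 1) * |φ z.1 - φ z.2| / K z) :=
    ((((hu.comp measurable_fst).sub (hu.comp measurable_snd)).abs.pow measurable_const).mul
      ((hφ.comp measurable_fst).sub (hφ.comp measurable_snd)).abs).div
      ((measurable_fst.sub measurable_snd).norm.pow measurable_const)
  refine ⟨hfmeas.aestronglyMeasurable, ?_⟩
  rw [hasFiniteIntegral_iff_ofReal (Filter.Eventually.of_forall fun z => by positivity)]
  have hA : AEMeasurable (fun z => F z ^ (1 / q')) volume :=
    (hFmeas.pow measurable_const).aemeasurable
  have hB : AEMeasurable (fun z => G z ^ (1 / p)) volume :=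
    (hGmeas.pow measurable_const).aemeasurable
  have big := ENNReal.lintegral_mul_le_Lp_mul_Lq volume hpq hA hB
  simp only [Pi.mul_apply] at big
  have eF : ∀ z, (F z ^ (1 / q')) ^ q' = F z := by
    intro z
    rw [← ENNReal.rpow_mul, one_div, inv_mul_cancel₀ hq'pos.ne', ENNReal.rpow_one]
  have eG : ∀ z, (G z ^ (1 / p)) ^ p = G z := by
    intro z
    rw [← ENNReal.rpow_mul, one_div, inv_mul_cancel₀ hp0.ne', ENNReal.rpow_one]
  calc ∫⁻ z, ENNReal.ofReal (|u z.1 - u z.2| ^ (p - 1) * |φ z.1 - φ z.2| / K z)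
      ≤ ∫⁻ z, F z ^ (1 / q') * G z ^ (1 / p) := lintegral_mono key
    _ ≤ (∫⁻ z, (F z ^ (1 / q')) ^ q') ^ (1 / q') * (∫⁻ z, (G z ^ (1 / p)) ^ p) ^ (1 / p) := big
    _ = (∫⁻ z, F z) ^ (1 / q') * (∫⁻ z, G z) ^ (1 / p) := by
        rw [lintegral_congr eF, lintegral_congr eG]
    _ < ⊤ := by
        have hu' : (∫⁻ z, F z) = gagliardo d s p u := rfl
        have hφ' : (∫⁻ z, G z) = gagliardo d s p φ := rfl
        rw [hu', hφ']
        exact ENNReal.mul_lt_top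
          (ENNReal.rpow_lt_top_of_nonneg (by positivity) h1.ne)
          (ENNReal.rpow_lt_top_of_nonneg (by positivity) h2.ne)

end Holder

section Helpers
variable {d : ℕ} {s p : ℝ}

lemma exists_bound_of_memLpTop {α : Type*} [MeasurableSpace α] {μ : Measure α} {f : α → ℝ}
    (hf : MemLp f ⊤ μ) : ∃ C : ℝ, 0 ≤ C ∧ ∀ᵐ x ∂μ, |f x| ≤ C := by
  refine ⟨(eLpNormEssSup f μ).toReal, ENNReal.toReal_nonneg, ?_⟩
  have h2 : eLpNormEssSup f μ ≠ ⊤ := by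
    have h3 := hf.2
    rwa [eLpNorm_exponent_top, lt_top_iff_ne_top] at h3
  filter_upwards [ae_le_eLpNormEssSup (f := f) (μ := μ)] with x hx
  have : ((‖f x‖₊ : ℝ≥0∞)).toReal ≤ (eLpNormEssSup f μ).toReal := ENNReal.toReal_mono h2 hx
  simpa [Real.norm_eq_abs] using this

lemma measurable_pairingIntegrand {u φ : EuclideanSpace ℝ (Fin d) → ℝ}
    (hu : Measurable u) (hφ : Measurable φ) (r : ℝ) :
    Measurable (fun z : EuclideanSpace ℝ (Fin d) × EuclideanSpace ℝ (Fin d) =>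
      spow r (u z.1 - u z.2) * (φ z.1 - φ z.2) / ‖z.1 - z.2‖ ^ ((d : ℝ) + s * p)) :=
  (((measurable_spow r).comp ((hu.comp measurable_fst).sub (hu.comp measurable_snd))).mul
    ((hφ.comp measurable_fst).sub (hφ.comp measurable_snd))).div
    ((measurable_fst.sub measurable_snd).norm.pow measurable_const)

lemma pairing_integrable (hp : 1 < p) {u φ : EuclideanSpace ℝ (Fin d) → ℝ}
    (hu : Measurable u) (hφ : Measurable φ)
    (h1 : gagliardo d s p u < ⊤) (h2 : gagliardo d s p φ < ⊤) :
    Integrable (fun z : EuclideanSpace ℝ (Fin d) × EuclideanSpace ℝ (Fin d) =>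
      spow (p - 1) (u z.1 - u z.2) * (φ z.1 - φ z.2) / ‖z.1 - z.2‖ ^ ((d : ℝ) + s * p)) := by
  refine (holder_integrable hp hu hφ h1 h2).mono'
    (measurable_pairingIntegrand hu hφ _).aestronglyMeasurable
    (Filter.Eventually.of_forall fun z => ?_)
  rw [Real.norm_eq_abs, abs_div, abs_mul, abs_spow (by linarith : (0:ℝ) < p - 1),
    abs_of_nonneg (Real.rpow_nonneg (norm_nonneg _) _)]

end Helpers

set_option maxHeartbeats 1000000

/-- one implicit Euler step preserves stationary supersolutions.
If `w ≥ 0` is a weak supersolution of `(−Δ)^s_p w = w^{q/m}` and `v` solves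
`(1/Δt)β(v) + (−Δ)^s_p v = w^{q/m} + (1/Δt)β(w)` weakly, then `0 ≤ v ≤ w` a.e. in `Ω`
and `v` is itself a weak supersolution. -/
theorem stmt16 (d : ℕ) (hd : 1 ≤ d) (p s m q : ℝ) (hp : 1 < p)
    (hs : s ∈ Set.Ioo (0 : ℝ) 1) (hm : 1 < m) (hq : 0 < q)
    (Δt : ℝ) (hΔt : 0 < Δt)
    (Ω : Set (EuclideanSpace ℝ (Fin d))) (hΩo : IsOpen Ω) (hΩb : Bornology.IsBounded Ω)
    (w v : EuclideanSpace ℝ (Fin d) → ℝ)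
    (hw : memW0 d s p Ω w) (hwB : MemLp w ⊤ (volume.restrict Ω))
    (hwnn : ∀ᵐ x, 0 ≤ w x)
    (hwsuper : ∀ φ : EuclideanSpace ℝ (Fin d) → ℝ,
      memW0 d s p Ω φ → (∀ x, 0 ≤ φ x) →
      fracPairing d s p w φ ≥ ∫ x in Ω, w x ^ (q / m) * φ x)
    (hv : memW0 d s p Ω v) (hvB : MemLp v ⊤ (volume.restrict Ω))
    (heq : ∀ φ : EuclideanSpace ℝ (Fin d) → ℝ,
      memW0 d s p Ω φ → MemLp φ ⊤ (volume.restrict Ω) →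
      (1 / Δt) * (∫ x in Ω, (spow m⁻¹ (v x) - spow m⁻¹ (w x)) * φ x) +
        fracPairing d s p v φ = ∫ x in Ω, w x ^ (q / m) * φ x) :
    (∀ᵐ x ∂(volume.restrict Ω), 0 ≤ v x ∧ v x ≤ w x) ∧
      ∀ φ : EuclideanSpace ℝ (Fin d) → ℝ,
        memW0 d s p Ω φ → (∀ x, 0 ≤ φ x) →
        fracPairing d s p v φ ≥ ∫ x in Ω, v x ^ (q / m) * φ x := by
  obtain ⟨hs0, hs1⟩ := hs
  obtain ⟨hwm, hwp, hwg, hw0⟩ := hw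
  obtain ⟨hvm, hvp, hvg, hv0⟩ := hv
  have hp0 : (0:ℝ) < p := by linarith
  have hp1 : (0:ℝ) < p - 1 := by linarith
  have hm0 : (0:ℝ) < m⁻¹ := by positivity
  have hqm : (0:ℝ) ≤ q / m := by positivity
  have hΩfin : volume Ω < ⊤ := hΩb.measure_lt_top
  haveI : IsFiniteMeasure (volume.restrict Ω) :=
    ⟨by rwa [Measure.restrict_apply_univ]⟩
  obtain ⟨Cv, hCv0, hCv⟩ := exists_bound_of_memLpTop hvB
  obtain ⟨Cw, hCw0, hCw⟩ := exists_bound_of_memLpTop hwB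
  have hwnnΩ : ∀ᵐ x ∂(volume.restrict Ω), 0 ≤ w x := ae_restrict_of_ae hwnn
  -- ============ STEP A : v ≤ w a.e. on Ω ============
  have stepA : ∀ᵐ x ∂(volume.restrict Ω), v x ≤ w x := by
    set φ1 : EuclideanSpace ℝ (Fin d) → ℝ := fun x => max (v x - w x) 0 with hφ1
    have hφ1m : Measurable φ1 := (hvm.sub hwm).max measurable_const
    have hφ1nn : ∀ x, 0 ≤ φ1 x := fun x => le_max_right _ _
    have hφ1abs : ∀ x, |φ1 x| ≤ |v x - w x| := by
      intro x
      rw [abs_of_nonneg (hφ1nn x)]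
      exact max_le (le_abs_self _) (abs_nonneg _)
    have hφ1lip : ∀ x y, |φ1 x - φ1 y| ≤ |(v x - w x) - (v y - w y)| := fun x y =>
      abs_max_sub_max_le_abs (v x - w x) (v y - w y) 0
    have hφ1g : gagliardo d s p φ1 < ⊤ :=
      lt_of_le_of_lt (gagliardo_mono hp0.le hφ1lip)
        (gagliardo_sub_lt_top hp.le hvm hvg hwg)
    have hφ1p : MemLp φ1 (ENNReal.ofReal p) volume := by
      refine (hvp.sub hwp).of_le hφ1m.aestronglyMeasurable
        (Filter.Eventually.of_forall fun x => ?_)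
      simpa [Real.norm_eq_abs] using hφ1abs x
    have hφ1W : memW0 d s p Ω φ1 := by
      refine ⟨hφ1m, hφ1p, hφ1g, ?_⟩
      filter_upwards [hv0, hw0] with x h1 h2 hx
      simp [hφ1, h1 hx, h2 hx]
    have hφ1B : MemLp φ1 ⊤ (volume.restrict Ω) := by
      refine memLp_top_of_bound hφ1m.aestronglyMeasurable (Cv + Cw) ?_
      filter_upwards [hCv, hCw] with x h1 h2
      rw [Real.norm_eq_abs]
      calc |φ1 x| ≤ |v x - w x| := hφ1abs x
        _ ≤ |v x| + |w x| := abs_sub _ _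
        _ ≤ Cv + Cw := add_le_add h1 h2
    have hsup1 := hwsuper φ1 hφ1W hφ1nn
    have heq1 := heq φ1 hφ1W hφ1B
    have hIv : Integrable (fun z : EuclideanSpace ℝ (Fin d) × EuclideanSpace ℝ (Fin d) =>
        spow (p - 1) (v z.1 - v z.2) * (φ1 z.1 - φ1 z.2) / ‖z.1 - z.2‖ ^ ((d : ℝ) + s * p)) :=
      pairing_integrable hp hvm hφ1m hvg hφ1g
    have hIw : Integrable (fun z : EuclideanSpace ℝ (Fin d) × EuclideanSpace ℝ (Fin d) =>
        spow (p - 1) (w z.1 - w z.2) * (φ1 z.1 - φ1 z.2) / ‖z.1 - z.2‖ ^ ((d : ℝ) + s * p)) :=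
      pairing_integrable hp hwm hφ1m hwg hφ1g
    have hEmono : fracPairing d s p w φ1 ≤ fracPairing d s p v φ1 := by
      refine integral_mono hIw hIv fun z => ?_
      have key := spow_sub_mul_max_nonneg hp1
        (A := v z.1 - v z.2) (B := w z.1 - w z.2)
        (a := v z.1 - w z.1) (b := v z.2 - w z.2) (by ring)
      have hKnn : (0:ℝ) ≤ ‖z.1 - z.2‖ ^ ((d : ℝ) + s * p) :=
        Real.rpow_nonneg (norm_nonneg _) _
      have h3 : 0 ≤ (spow (p - 1) (v z.1 - v z.2) - spow (p - 1) (w z.1 - w z.2))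
          * (φ1 z.1 - φ1 z.2) / ‖z.1 - z.2‖ ^ ((d : ℝ) + s * p) :=
        div_nonneg key hKnn
      rw [sub_mul, ← div_sub_div_same] at h3
      linarith
    have hI1le : (∫ x in Ω, (spow m⁻¹ (v x) - spow m⁻¹ (w x)) * φ1 x) ≤ 0 := by
      have h4 : (1 / Δt) * (∫ x in Ω, (spow m⁻¹ (v x) - spow m⁻¹ (w x)) * φ1 x)
          ≤ (1 / Δt) * 0 := by rw [mul_zero]; linarith
      exact (mul_le_mul_iff_right₀ (one_div_pos.2 hΔt)).1 h4
    have hI1ge : 0 ≤ (∫ x in Ω, (spow m⁻¹ (v x) - spow m⁻¹ (w x)) * φ1 x) := by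
      refine setIntegral_nonneg hΩo.measurableSet fun x _ => ?_
      have key := spow_sub_mul_max_nonneg hm0 (A := v x) (B := w x)
        (a := v x - w x) (b := 0) (by ring)
      simpa [hφ1] using key
    have hI1 : (∫ x in Ω, (spow m⁻¹ (v x) - spow m⁻¹ (w x)) * φ1 x) = 0 :=
      le_antisymm hI1le hI1ge
    have hgInt : Integrable (fun x => (spow m⁻¹ (v x) - spow m⁻¹ (w x)) * φ1 x)
        (volume.restrict Ω) := by
      refine (integrable_const ((Cv ^ m⁻¹ + Cw ^ m⁻¹) * (Cv + Cw))).mono'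
        ((((measurable_spow _).comp hvm).sub
          ((measurable_spow _).comp hwm)).mul hφ1m).aestronglyMeasurable ?_
      filter_upwards [hCv, hCw] with x h1 h2
      rw [Real.norm_eq_abs, abs_mul]
      have e1 : |spow m⁻¹ (v x) - spow m⁻¹ (w x)| ≤ Cv ^ m⁻¹ + Cw ^ m⁻¹ := by
        refine (abs_sub _ _).trans (add_le_add ?_ ?_) <;> rw [abs_spow hm0]
        · exact Real.rpow_le_rpow (abs_nonneg _) h1 hm0.le
        · exact Real.rpow_le_rpow (abs_nonneg _) h2 hm0.le
      have e2 : |φ1 x| ≤ Cv + Cw := (hφ1abs x).trans ((abs_sub _ _).trans (add_le_add h1 h2))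
      exact mul_le_mul e1 e2 (abs_nonneg _) (by positivity)
    have h5 := (integral_eq_zero_iff_of_nonneg_ae (Filter.Eventually.of_forall fun x => by
      have key := spow_sub_mul_max_nonneg hm0 (A := v x) (B := w x)
        (a := v x - w x) (b := 0) (by ring)
      simpa [hφ1] using key) hgInt).1 hI1
    filter_upwards [h5] with x hx
    by_contra hc
    push_neg at hc
    have hx' : (spow m⁻¹ (v x) - spow m⁻¹ (w x)) * φ1 x = 0 := hx
    have h6 : spow m⁻¹ (w x) < spow m⁻¹ (v x) := spow_strictMono hm0 hc
    have h7 : 0 < φ1 x := lt_max_iff.2 (Or.inl (by linarith))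
    nlinarith
  -- ============ STEP B : 0 ≤ v a.e. on Ω ============
  have stepB : ∀ᵐ x ∂(volume.restrict Ω), 0 ≤ v x := by
    set φ2 : EuclideanSpace ℝ (Fin d) → ℝ := fun x => max (-v x) 0 with hφ2
    have hφ2m : Measurable φ2 := hvm.neg.max measurable_const
    have hφ2nn : ∀ x, 0 ≤ φ2 x := fun x => le_max_right _ _
    have hφ2abs : ∀ x, |φ2 x| ≤ |v x| := by
      intro x
      rw [abs_of_nonneg (hφ2nn x)]
      exact max_le (neg_le_abs _) (abs_nonneg _)
    have hφ2lip : ∀ x y, |φ2 x - φ2 y| ≤ |v x - v y| := by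
      intro x y
      have h := abs_max_sub_max_le_abs (-v x) (-v y) 0
      calc |φ2 x - φ2 y| ≤ |(-v x) - (-v y)| := h
        _ = |v x - v y| := by rw [neg_sub_neg, abs_sub_comm]
    have hφ2g : gagliardo d s p φ2 < ⊤ :=
      lt_of_le_of_lt (gagliardo_mono hp0.le hφ2lip) hvg
    have hφ2p : MemLp φ2 (ENNReal.ofReal p) volume := by
      refine hvp.of_le hφ2m.aestronglyMeasurable
        (Filter.Eventually.of_forall fun x => ?_)
      simpa [Real.norm_eq_abs] using hφ2abs x
    have hφ2W : memW0 d s p Ω φ2 := by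
      refine ⟨hφ2m, hφ2p, hφ2g, ?_⟩
      filter_upwards [hv0] with x h1 hx
      simp [hφ2, h1 hx]
    have hφ2B : MemLp φ2 ⊤ (volume.restrict Ω) := by
      refine memLp_top_of_bound hφ2m.aestronglyMeasurable Cv ?_
      filter_upwards [hCv] with x h1
      rw [Real.norm_eq_abs]
      exact (hφ2abs x).trans h1
    have heq2 := heq φ2 hφ2W hφ2B
    have hE2 : fracPairing d s p v φ2 ≤ 0 := by
      refine integral_nonpos fun z => ?_
      simp only [Pi.zero_apply]
      have key := spow_sub_mul_max_nonneg hp1 (A := -v z.1 - -v z.2) (B := 0)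
        (a := -v z.1) (b := -v z.2) (by ring)
      rw [spow_zero, sub_zero] at key
      have hrw : -v z.1 - -v z.2 = -(v z.1 - v z.2) := by ring
      rw [hrw, spow_neg, neg_mul] at key
      have key2 : spow (p - 1) (v z.1 - v z.2) * (φ2 z.1 - φ2 z.2) ≤ 0 := by
        simp only [hφ2]
        linarith
      have hKnn : (0:ℝ) ≤ ‖z.1 - z.2‖ ^ ((d : ℝ) + s * p) :=
        Real.rpow_nonneg (norm_nonneg _) _
      have := div_nonneg (neg_nonneg.2 key2) hKnn
      rw [neg_div] at this
      linarith
    have hRHS2 : 0 ≤ ∫ x in Ω, w x ^ (q / m) * φ2 x := by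
      refine integral_nonneg_of_ae ?_
      filter_upwards [hwnnΩ] with x hx
      exact mul_nonneg (Real.rpow_nonneg hx _) (hφ2nn x)
    have hI2ge : 0 ≤ ∫ x in Ω, (spow m⁻¹ (v x) - spow m⁻¹ (w x)) * φ2 x := by
      have h4 : (1 / Δt) * 0
          ≤ (1 / Δt) * (∫ x in Ω, (spow m⁻¹ (v x) - spow m⁻¹ (w x)) * φ2 x) := by
        rw [mul_zero]; linarith
      exact (mul_le_mul_iff_right₀ (one_div_pos.2 hΔt)).1 h4
    have hI2le : (∫ x in Ω, (spow m⁻¹ (v x) - spow m⁻¹ (w x)) * φ2 x) ≤ 0 := by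
      refine integral_nonpos_of_ae ?_
      filter_upwards [hwnnΩ] with x hwx
      simp only [Pi.zero_apply]
      rcases le_or_gt 0 (v x) with h | h
      · have : φ2 x = 0 := max_eq_right (neg_nonpos.2 h)
        rw [this, mul_zero]
      · have h6 : spow m⁻¹ (v x) < 0 := spow_neg_of_neg h
        have h7 : 0 ≤ spow m⁻¹ (w x) := by
          rw [spow_of_nonneg hm0 hwx]; exact Real.rpow_nonneg hwx _
        exact mul_nonpos_iff.2 (Or.inr ⟨by linarith, hφ2nn x⟩)
    have hI2 : (∫ x in Ω, (spow m⁻¹ (v x) - spow m⁻¹ (w x)) * φ2 x) = 0 :=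
      le_antisymm hI2le hI2ge
    have hgInt : Integrable (fun x => -((spow m⁻¹ (v x) - spow m⁻¹ (w x)) * φ2 x))
        (volume.restrict Ω) := by
      refine (integrable_const ((Cv ^ m⁻¹ + Cw ^ m⁻¹) * Cv)).mono'
        (((((measurable_spow _).comp hvm).sub
          ((measurable_spow _).comp hwm)).mul hφ2m).neg).aestronglyMeasurable ?_
      filter_upwards [hCv, hCw] with x h1 h2
      rw [Real.norm_eq_abs, abs_neg, abs_mul]
      have e1 : |spow m⁻¹ (v x) - spow m⁻¹ (w x)| ≤ Cv ^ m⁻¹ + Cw ^ m⁻¹ := by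
        refine (abs_sub _ _).trans (add_le_add ?_ ?_) <;> rw [abs_spow hm0]
        · exact Real.rpow_le_rpow (abs_nonneg _) h1 hm0.le
        · exact Real.rpow_le_rpow (abs_nonneg _) h2 hm0.le
      have e2 : |φ2 x| ≤ Cv := (hφ2abs x).trans h1
      exact mul_le_mul e1 e2 (abs_nonneg _) (by positivity)
    have hI2' : (∫ x in Ω, -((spow m⁻¹ (v x) - spow m⁻¹ (w x)) * φ2 x)) = 0 := by
      rw [integral_neg, hI2, neg_zero]
    have h5 := (integral_eq_zero_iff_of_nonneg_ae (by
      filter_upwards [hwnnΩ] with x hwx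
      rcases le_or_gt 0 (v x) with h | h
      · have hz : φ2 x = 0 := max_eq_right (neg_nonpos.2 h)
        simp [hz]
      · have h6 : spow m⁻¹ (v x) < 0 := spow_neg_of_neg h
        have h7 : 0 ≤ spow m⁻¹ (w x) := by
          rw [spow_of_nonneg hm0 hwx]; exact Real.rpow_nonneg hwx _
        have h8 : 0 ≤ φ2 x := hφ2nn x
        simp only [Pi.zero_apply]
        nlinarith) hgInt).1 hI2'
    filter_upwards [h5, hwnnΩ] with x hx hwx
    by_contra hc
    push_neg at hc
    have hx' : -((spow m⁻¹ (v x) - spow m⁻¹ (w x)) * φ2 x) = 0 := hx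
    have h6 : spow m⁻¹ (v x) < 0 := spow_neg_of_neg hc
    have h7 : 0 ≤ spow m⁻¹ (w x) := by
      rw [spow_of_nonneg hm0 hwx]; exact Real.rpow_nonneg hwx _
    have h8 : 0 < φ2 x := lt_max_iff.2 (Or.inl (by linarith))
    nlinarith
  -- ============ STEP C : supersolution ============
  have part1 : ∀ᵐ x ∂(volume.restrict Ω), 0 ≤ v x ∧ v x ≤ w x := by
    filter_upwards [stepB, stepA] with x h1 h2
    exact ⟨h1, h2⟩
  refine ⟨part1, ?_⟩
  intro φ hφW hφnn
  obtain ⟨hφm, hφp, hφg, hφ0⟩ := hφW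
  have hφInt : Integrable φ (volume.restrict Ω) := by
    have h1 : MemLp φ (ENNReal.ofReal p) (volume.restrict Ω) := hφp.restrict Ω
    have h2 : MemLp φ 1 (volume.restrict Ω) :=
      h1.mono_exponent (ENNReal.one_le_ofReal.2 hp.le)
    exact memLp_one_iff_integrable.1 h2
  -- the truncations
  set φk : ℕ → EuclideanSpace ℝ (Fin d) → ℝ := fun k x => min (φ x) k with hφk
  have hφkm : ∀ k, Measurable (φk k) := fun k => hφm.min measurable_const
  have hφknn : ∀ k x, 0 ≤ φk k x := fun k x => le_min (hφnn x) (Nat.cast_nonneg k)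
  have hφkle : ∀ k x, φk k x ≤ φ x := fun k x => min_le_left _ _
  have hφkabs : ∀ k x, |φk k x| ≤ |φ x| := fun k x => by
    rw [abs_of_nonneg (hφknn k x), abs_of_nonneg (hφnn x)]; exact hφkle k x
  have hφklip : ∀ k x y, |φk k x - φk k y| ≤ |φ x - φ y| := fun k x y =>
    abs_min_sub_min_le_abs _ _ _
  have hφkg : ∀ k, gagliardo d s p (φk k) < ⊤ := fun k =>
    lt_of_le_of_lt (gagliardo_mono hp0.le (hφklip k)) hφg
  have hφkW : ∀ k, memW0 d s p Ω (φk k) := by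
    intro k
    refine ⟨hφkm k, ?_, hφkg k, ?_⟩
    · refine hφp.of_le (hφkm k).aestronglyMeasurable
        (Filter.Eventually.of_forall fun x => ?_)
      simpa [Real.norm_eq_abs] using hφkabs k x
    · filter_upwards [hφ0] with x h1 hx
      simp [hφk, h1 hx]
  have hφkB : ∀ k, MemLp (φk k) ⊤ (volume.restrict Ω) := by
    intro k
    refine memLp_top_of_bound (hφkm k).aestronglyMeasurable k ?_
    refine Filter.Eventually.of_forall fun x => ?_
    rw [Real.norm_eq_abs, abs_of_nonneg (hφknn k x)]
    exact min_le_right _ _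
  -- key inequality for each k
  have keyk : ∀ k : ℕ, (∫ x in Ω, v x ^ (q / m) * φk k x) ≤ fracPairing d s p v (φk k) := by
    intro k
    have heqk := heq (φk k) (hφkW k) (hφkB k)
    have hIkle : (∫ x in Ω, (spow m⁻¹ (v x) - spow m⁻¹ (w x)) * φk k x) ≤ 0 := by
      refine integral_nonpos_of_ae ?_
      filter_upwards [stepA] with x hvw
      simp only [Pi.zero_apply]
      have h6 : spow m⁻¹ (v x) ≤ spow m⁻¹ (w x) := spow_mono hm0 hvw
      exact mul_nonpos_iff.2 (Or.inr ⟨by linarith, hφknn k x⟩)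
    have hIntw : Integrable (fun x => w x ^ (q / m) * φk k x) (volume.restrict Ω) := by
      refine (integrable_const (Cw ^ (q / m) * (k : ℝ))).mono'
        ((hwm.pow measurable_const).mul (hφkm k)).aestronglyMeasurable ?_
      filter_upwards [hCw] with x h1
      rw [Real.norm_eq_abs, abs_mul]
      refine mul_le_mul ((Real.abs_rpow_le_abs_rpow _ _).trans
        (Real.rpow_le_rpow (abs_nonneg _) h1 hqm)) ?_ (abs_nonneg _) (by positivity)
      rw [abs_of_nonneg (hφknn k x)]
      exact min_le_right _ _
    have hIntv : Integrable (fun x => v x ^ (q / m) * φk k x) (volume.restrict Ω) := by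
      refine (integrable_const (Cv ^ (q / m) * (k : ℝ))).mono'
        ((hvm.pow measurable_const).mul (hφkm k)).aestronglyMeasurable ?_
      filter_upwards [hCv] with x h1
      rw [Real.norm_eq_abs, abs_mul]
      refine mul_le_mul ((Real.abs_rpow_le_abs_rpow _ _).trans
        (Real.rpow_le_rpow (abs_nonneg _) h1 hqm)) ?_ (abs_nonneg _) (by positivity)
      rw [abs_of_nonneg (hφknn k x)]
      exact min_le_right _ _
    have hRHSk : (∫ x in Ω, v x ^ (q / m) * φk k x) ≤ ∫ x in Ω, w x ^ (q / m) * φk k x := by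
      refine integral_mono_ae hIntv hIntw ?_
      filter_upwards [stepA, stepB, hwnnΩ] with x h1 h2 h3
      exact mul_le_mul_of_nonneg_right (Real.rpow_le_rpow h2 h1 hqm) (hφknn k x)
    have h4 : 0 ≤ (1 / Δt) * 0 - (1 / Δt) *
        (∫ x in Ω, (spow m⁻¹ (v x) - spow m⁻¹ (w x)) * φk k x) := by
      have := mul_le_mul_of_nonneg_left hIkle (le_of_lt (one_div_pos.2 hΔt))
      rw [mul_zero]
      linarith
    rw [mul_zero] at h4
    linarith
  -- limit passage
  have hbound : Integrable (fun z : EuclideanSpace ℝ (Fin d) × EuclideanSpace ℝ (Fin d) =>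
      |v z.1 - v z.2| ^ (p - 1) * |φ z.1 - φ z.2| / ‖z.1 - z.2‖ ^ ((d : ℝ) + s * p)) :=
    holder_integrable hp hvm hφm hvg hφg
  have T2 : Filter.Tendsto (fun k : ℕ => fracPairing d s p v (φk k)) Filter.atTop
      (nhds (fracPairing d s p v φ)) := by
    refine tendsto_integral_of_dominated_convergence _
      (fun k => (measurable_pairingIntegrand hvm (hφkm k) _).aestronglyMeasurable)
      hbound ?_ ?_
    · intro k
      refine Filter.Eventually.of_forall fun z => ?_
      have hKnn : (0:ℝ) ≤ ‖z.1 - z.2‖ ^ ((d : ℝ) + s * p) :=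
        Real.rpow_nonneg (norm_nonneg _) _
      rw [Real.norm_eq_abs, abs_div, abs_mul, abs_spow hp1, abs_of_nonneg hKnn,
        div_eq_mul_inv, div_eq_mul_inv]
      exact mul_le_mul_of_nonneg_right
        (mul_le_mul_of_nonneg_left (hφklip k z.1 z.2) (Real.rpow_nonneg (abs_nonneg _) _))
        (inv_nonneg.2 hKnn)
    · refine Filter.Eventually.of_forall fun z => ?_
      have : ∀ᶠ k : ℕ in Filter.atTop,
          spow (p - 1) (v z.1 - v z.2) * (φk k z.1 - φk k z.2) / ‖z.1 - z.2‖ ^ ((d : ℝ) + s * p)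
            = spow (p - 1) (v z.1 - v z.2) * (φ z.1 - φ z.2) / ‖z.1 - z.2‖ ^ ((d : ℝ) + s * p) := by
        rw [Filter.eventually_atTop]
        refine ⟨max ⌈φ z.1⌉₊ ⌈φ z.2⌉₊, fun k hk => ?_⟩
        have e1 : φk k z.1 = φ z.1 := min_eq_left ((Nat.le_ceil _).trans
          (Nat.cast_le.2 (le_trans (le_max_left _ _) hk)))
        have e2 : φk k z.2 = φ z.2 := min_eq_left ((Nat.le_ceil _).trans
          (Nat.cast_le.2 (le_trans (le_max_right _ _) hk)))
        rw [e1, e2]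
      exact Filter.Tendsto.congr' (Filter.EventuallyEq.symm this) tendsto_const_nhds
  have T1 : Filter.Tendsto (fun k : ℕ => ∫ x in Ω, v x ^ (q / m) * φk k x) Filter.atTop
      (nhds (∫ x in Ω, v x ^ (q / m) * φ x)) := by
    refine tendsto_integral_of_dominated_convergence (fun x => Cv ^ (q / m) * |φ x|)
      (fun k => ((hvm.pow measurable_const).mul (hφkm k)).aestronglyMeasurable)
      ((hφInt.abs).const_mul _) ?_ ?_
    · intro k
      filter_upwards [hCv] with x h1
      rw [Real.norm_eq_abs, abs_mul]
      refine mul_le_mul ((Real.abs_rpow_le_abs_rpow _ _).trans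
        (Real.rpow_le_rpow (abs_nonneg _) h1 hqm)) ?_ (abs_nonneg _) (by positivity)
      rw [abs_of_nonneg (hφknn k x), abs_of_nonneg (hφnn x)]
      exact hφkle k x
    · refine Filter.Eventually.of_forall fun x => ?_
      have : ∀ᶠ k : ℕ in Filter.atTop,
          v x ^ (q / m) * φk k x = v x ^ (q / m) * φ x := by
        rw [Filter.eventually_atTop]
        refine ⟨⌈φ x⌉₊, fun k hk => ?_⟩
        have e1 : φk k x = φ x := min_eq_left ((Nat.le_ceil _).trans (Nat.cast_le.2 hk))
        rw [e1]
      exact Filter.Tendsto.congr' (Filter.EventuallyEq.symm this) tendsto_const_nhds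
  exact le_of_tendsto_of_tendsto' T1 T2 keyk
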